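/- Let ℓ ≥ 0 be an integer and x₀ ∈ ℝ². Denote by P_ℓ the real vector space of polynomials in two variables of total degree at most ℓ (with the convention P_{−1} = {0}). Define the subspaces of P_ℓ × P_ℓ: R_ℓ := { (∂₂q, −∂₁q) : q ∈ P_{ℓ+1} } (rotated gradients) and R^c_ℓ := { ((X₁ − x₀₁) r, (X₂ − x₀₂) r) : r ∈ P_{ℓ−1} }. Then P_ℓ × P_ℓ is the internal direct sum of R_ℓ and R^c_ℓ, i.e. R_ℓ ∩ R^c_ℓ = {0} and R_ℓ + R^c_ℓ = P_ℓ × P_ℓ. -/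

import Mathlib

open MvPolynomial Finsupp

lemma coeff_pderiv'' (i : Fin 2) (m : Fin 2 →₀ ℕ) (p : MvPolynomial (Fin 2) ℝ) :
    coeff m (pderiv i p) = ((m i + 1 : ℕ) : ℝ) * coeff (m + Finsupp.single i 1) p := by
  induction p using MvPolynomial.induction_on' with
  | add p q hp hq => simp [hp, hq, mul_add]
  | monomial s a =>
    rw [pderiv_monomial, coeff_monomial, coeff_monomial]
    by_cases h : s = m + Finsupp.single i 1
    · subst h
      simp [add_tsub_cancel_right, mul_comm]
    · rw [if_neg h]
      by_cases h2 : s - Finsupp.single i 1 = m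
      · have hsi : s i = 0 := by
          by_contra hsi
          apply h
          rw [← h2]
          ext j
          simp only [Finsupp.add_apply, Finsupp.tsub_apply, Finsupp.single_apply]
          rcases eq_or_ne i j with rfl | hij
          · simp; omega
          · simp [hij]
        simp [h2, hsi]
      · simp [h2]

lemma coeff_X_mul_pderiv (i : Fin 2) (m : Fin 2 →₀ ℕ) (p : MvPolynomial (Fin 2) ℝ) :
    coeff m (X i * pderiv i p) = ((m i : ℕ) : ℝ) * coeff m p := by
  classical
  rw [coeff_X_mul']
  by_cases h : i ∈ m.support
  · rw [if_pos h, coeff_pderiv'']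
    have hmi : m i ≠ 0 := Finsupp.mem_support_iff.mp h
    have h1 : (m - Finsupp.single i 1) + Finsupp.single i 1 = m := by
      ext j
      simp only [Finsupp.add_apply, Finsupp.tsub_apply, Finsupp.single_apply]
      rcases eq_or_ne i j with rfl | hij
      · simp; omega
      · simp [hij]
    have h2 : ((m - Finsupp.single i 1 : Fin 2 →₀ ℕ)) i + 1 = m i := by
      rw [Finsupp.tsub_apply, Finsupp.single_apply, if_pos rfl]; omega
    rw [h1, h2]
  · rw [if_neg h]
    have : m i = 0 := by simpa using h
    rw [this]; simp

lemma euler_coeff (m : Fin 2 →₀ ℕ) (p : MvPolynomial (Fin 2) ℝ) :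
    coeff m (C 2 * p + X 0 * pderiv 0 p + X 1 * pderiv 1 p)
      = ((2 + m 0 + m 1 : ℕ) : ℝ) * coeff m p := by
  rw [coeff_add, coeff_add, coeff_C_mul, coeff_X_mul_pderiv, coeff_X_mul_pderiv]
  push_cast
  ring

lemma euler_inj (p : MvPolynomial (Fin 2) ℝ)
    (h : C 2 * p + X 0 * pderiv 0 p + X 1 * pderiv 1 p = 0) : p = 0 := by
  ext m
  have := euler_coeff m p
  rw [h] at this
  simp only [coeff_zero] at this ⊢
  have h2 : ((2 + m 0 + m 1 : ℕ) : ℝ) ≠ 0 := by positivity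
  have h3 : ((2 + m 0 + m 1 : ℕ) : ℝ) * coeff m p = 0 := this.symm
  exact (mul_eq_zero.mp h3).resolve_left h2

lemma euler_surj (d : MvPolynomial (Fin 2) ℝ) :
    ∃ s : MvPolynomial (Fin 2) ℝ,
      C 2 * s + X 0 * pderiv 0 s + X 1 * pderiv 1 s = d ∧
      s.totalDegree ≤ d.totalDegree ∧ (d = 0 → s = 0) := by
  classical
  set s : MvPolynomial (Fin 2) ℝ :=
    ∑ m ∈ d.support, monomial m (coeff m d / ((2 + m 0 + m 1 : ℕ) : ℝ)) with hs
  have hcoeff : ∀ n, coeff n s = coeff n d / ((2 + n 0 + n 1 : ℕ) : ℝ) := by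
    intro n
    rw [hs, coeff_sum]
    simp only [coeff_monomial]
    rw [Finset.sum_ite_eq' d.support n (fun m => coeff m d / ((2 + m 0 + m 1 : ℕ) : ℝ))]
    by_cases h : n ∈ d.support
    · rw [if_pos h]
    · rw [if_neg h, MvPolynomial.notMem_support_iff.mp h, zero_div]
  refine ⟨s, ?_, ?_, ?_⟩
  · ext n
    rw [euler_coeff, hcoeff, mul_div_cancel₀]
    positivity
  · refine totalDegree_finsetSum_le fun m hm => ?_
    exact (totalDegree_monomial_le _ _).trans (le_totalDegree hm)
  · intro h
    simp [hs, h]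

noncomputable def shift2 (a b : ℝ) : MvPolynomial (Fin 2) ℝ →ₐ[ℝ] MvPolynomial (Fin 2) ℝ :=
  aeval (fun i : Fin 2 => X i + C (if i = 0 then a else b))

lemma shift2_X0 (a b : ℝ) : shift2 a b (X 0) = X 0 + C a := by simp [shift2]

lemma shift2_X1 (a b : ℝ) : shift2 a b (X 1) = X 1 + C b := by
  simp [shift2]

lemma shift2_shift2 (a b : ℝ) (p : MvPolynomial (Fin 2) ℝ) :
    shift2 (-a) (-b) (shift2 a b p) = p := by
  have h : (shift2 (-a) (-b)).comp (shift2 a b) = AlgHom.id ℝ (MvPolynomial (Fin 2) ℝ) := by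
    apply MvPolynomial.algHom_ext
    intro i
    fin_cases i <;> simp [shift2]
  calc shift2 (-a) (-b) (shift2 a b p) = ((shift2 (-a) (-b)).comp (shift2 a b)) p := rfl
    _ = p := by rw [h]; rfl

lemma pderiv_shift2 (a b : ℝ) (i : Fin 2) (p : MvPolynomial (Fin 2) ℝ) :
    pderiv i (shift2 a b p) = shift2 a b (pderiv i p) := by
  induction p using MvPolynomial.induction_on with
  | C c => simp [shift2]
  | add p q hp hq => simp [map_add, hp, hq]
  | mul_X p j hp =>
    rcases eq_or_ne j i with rfl | hij
    · simp only [map_mul, pderiv_mul, hp, pderiv_X_self, mul_one]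
      have h1 : pderiv j (shift2 a b (X j)) = 1 := by simp [shift2]
      rw [h1, mul_one, map_add, map_mul]
    · simp only [map_mul, pderiv_mul, hp, pderiv_X_of_ne hij, mul_zero, add_zero, map_add,
        map_mul]
      have : pderiv i (shift2 a b (X j)) = 0 := by
        simp [shift2, pderiv_X_of_ne hij]
      rw [this, mul_zero, add_zero]

lemma totalDegree_shift2_le (a b : ℝ) (p : MvPolynomial (Fin 2) ℝ) :
    (shift2 a b p).totalDegree ≤ p.totalDegree := by
  conv_lhs => rw [p.as_sum]
  rw [map_sum]
  refine totalDegree_finsetSum_le fun m hm => ?_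
  have hmon : shift2 a b (monomial m (coeff m p)) =
      C (coeff m p) * m.prod fun i k => (X i + C (if i = 0 then a else b)) ^ k := by
    show aeval _ (monomial m (coeff m p)) = _
    rw [aeval_monomial]
    rfl
  rw [hmon]
  refine (totalDegree_mul _ _).trans ?_
  rw [totalDegree_C, zero_add]
  refine le_trans ?_ (le_totalDegree hm)
  rw [Finsupp.prod]
  refine (totalDegree_finset_prod _ _).trans ?_
  rw [Finsupp.sum]
  refine Finset.sum_le_sum fun i _ => ?_
  refine (totalDegree_pow _ _).trans ?_
  have h1 : (X i + C (if i = 0 then a else b) : MvPolynomial (Fin 2) ℝ).totalDegree ≤ 1 := by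
    refine (totalDegree_add _ _).trans ?_
    simp [totalDegree_X, totalDegree_C]
  calc m i * (X i + C (if i = 0 then a else b) : MvPolynomial (Fin 2) ℝ).totalDegree
      ≤ m i * 1 := Nat.mul_le_mul_left _ h1
    _ = m i := Nat.mul_one _

lemma coeff_sum_monomial_shift (S : Finset (Fin 2 →₀ ℕ)) (e : Fin 2 →₀ ℕ)
    (c : (Fin 2 →₀ ℕ) → ℝ) (t : Fin 2 →₀ ℕ) :
    coeff t (∑ m ∈ S, monomial (m + e) (c m))
      = if e ≤ t ∧ t - e ∈ S then c (t - e) else 0 := by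
  classical
  rw [coeff_sum]
  simp only [coeff_monomial]
  by_cases he : e ≤ t
  · have hcond : ∀ m : Fin 2 →₀ ℕ, (m + e = t) ↔ (m = t - e) := by
      intro m
      constructor
      · intro h; rw [← h, add_tsub_cancel_right]
      · intro h; subst h; exact tsub_add_cancel_of_le he
    rw [Finset.sum_congr rfl fun m _ => if_congr (hcond m) rfl rfl,
        Finset.sum_ite_eq' S (t - e) c]
    simp [he]
  · have : ∀ m ∈ S, (if m + e = t then c m else 0) = 0 := by
      intro m _
      rw [if_neg]
      intro h
      exact he (h ▸ le_add_self)
    rw [Finset.sum_congr rfl this, Finset.sum_const_zero, if_neg]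
    tauto

lemma support_pderiv_le (i : Fin 2) (p : MvPolynomial (Fin 2) ℝ) (m : Fin 2 →₀ ℕ)
    (hm : m ∈ (pderiv i p).support) :
    (m.sum fun _ e => e) + 1 ≤ p.totalDegree := by
  have h := MvPolynomial.mem_support_iff.mp hm
  rw [coeff_pderiv''] at h
  have h2 : coeff (m + Finsupp.single i 1) p ≠ 0 := fun hz => h (by rw [hz, mul_zero])
  have h3 := le_totalDegree (MvPolynomial.mem_support_iff.mpr h2)
  have h4 : ((m + Finsupp.single i 1).sum fun _ e => e) = (m.sum fun _ e => e) + 1 := by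
    rw [Finsupp.sum_add_index' (fun _ => rfl) (fun _ _ _ => rfl),
      Finsupp.sum_single_index rfl]
  omega

lemma totalDegree_pderiv_le' (i : Fin 2) (p : MvPolynomial (Fin 2) ℝ) (n : ℕ)
    (h : p.totalDegree ≤ n + 1) : (pderiv i p).totalDegree ≤ n := by
  rw [totalDegree]
  refine Finset.sup_le fun m hm => ?_
  have := support_pderiv_le i p m hm
  omega

lemma poincare (ℓ : ℕ) (f g : MvPolynomial (Fin 2) ℝ)
    (hf : f.totalDegree ≤ ℓ) (hg : g.totalDegree ≤ ℓ)
    (hdiv : pderiv 0 f + pderiv 1 g = 0) :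
    ∃ q : MvPolynomial (Fin 2) ℝ, q.totalDegree ≤ ℓ + 1 ∧
      pderiv 1 q = f ∧ pderiv 0 q = -g := by
  classical
  have h01 : (0 : Fin 2) ≠ 1 := by decide
  set q1 : MvPolynomial (Fin 2) ℝ :=
    ∑ m ∈ f.support, monomial (m + Finsupp.single 1 1) (coeff m f / ((m 1 + 1 : ℕ) : ℝ)) with hq1
  set q2 : MvPolynomial (Fin 2) ℝ :=
    ∑ m ∈ g.support.filter (fun m => m 1 = 0),
      monomial (m + Finsupp.single 0 1) (-coeff m g / ((m 0 + 1 : ℕ) : ℝ)) with hq2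
  have hdeg : ∀ (m : Fin 2 →₀ ℕ) (i : Fin 2),
      ((m + Finsupp.single i 1).sum fun _ => id) = (m.sum fun _ => id) + 1 := by
    intro m i
    rw [Finsupp.sum_add_index' (fun _ => rfl) (fun _ _ _ => rfl),
      Finsupp.sum_single_index rfl]
    rfl
  refine ⟨q1 + q2, ?_, ?_, ?_⟩
  · refine (totalDegree_add _ _).trans (max_le ?_ ?_)
    · refine totalDegree_finsetSum_le fun m hm => ?_
      refine (totalDegree_monomial_le _ _).trans ?_
      rw [hdeg]
      exact Nat.add_le_add_right ((le_totalDegree hm).trans hf) 1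
    · refine totalDegree_finsetSum_le fun m hm => ?_
      refine (totalDegree_monomial_le _ _).trans ?_
      rw [hdeg]
      have hm' : m ∈ g.support := (Finset.mem_filter.mp hm).1
      exact Nat.add_le_add_right ((le_totalDegree hm').trans hg) 1
  · -- pderiv 1 (q1 + q2) = f
    have h1 : pderiv (1 : Fin 2) q1 = f := by
      rw [hq1, map_sum]
      have key : ∀ m ∈ f.support,
          pderiv (1 : Fin 2) (monomial (m + Finsupp.single 1 1)
            (coeff m f / ((m 1 + 1 : ℕ) : ℝ))) = monomial m (coeff m f) := by
        intro m hm
        rw [pderiv_monomial, add_tsub_cancel_right]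
        have hv : (m + Finsupp.single 1 1 : Fin 2 →₀ ℕ) 1 = m 1 + 1 := by simp
        rw [hv]
        congr 1
        rw [div_mul_cancel₀]
        exact Nat.cast_ne_zero.mpr (by omega)
      rw [Finset.sum_congr rfl key, ← as_sum]
    have h2 : pderiv (1 : Fin 2) q2 = 0 := by
      rw [hq2, map_sum]
      refine Finset.sum_eq_zero fun m hm => ?_
      rw [pderiv_monomial]
      have hv : (m + Finsupp.single 0 1 : Fin 2 →₀ ℕ) 1 = 0 := by
        have h3 := (Finset.mem_filter.mp hm).2
        simp [Finsupp.single_apply, h01, h3]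
      rw [hv]
      simp
    rw [map_add, h1, h2, add_zero]
  · -- pderiv 0 (q1 + q2) = -g
    ext n
    have hcp : coeff n (pderiv (0 : Fin 2) (q1 + q2))
        = ((n 0 + 1 : ℕ) : ℝ) * coeff (n + Finsupp.single 0 1) (q1 + q2) :=
      coeff_pderiv'' _ _ _
    have hn0 : ((n 0 + 1 : ℕ) : ℝ) ≠ 0 := Nat.cast_ne_zero.mpr (by omega)
    rw [hcp, coeff_add, hq1, hq2, coeff_sum_monomial_shift, coeff_sum_monomial_shift]
    have ht0 : (n + Finsupp.single 0 1) - Finsupp.single 0 1 = n := add_tsub_cancel_right _ _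
    have htv1 : (n + Finsupp.single 0 1 : Fin 2 →₀ ℕ) 1 = n 1 := by
      simp [Finsupp.single_apply, h01]
    by_cases hn : n 1 = 0
    · have hc1 : ¬ (Finsupp.single 1 1 ≤ n + Finsupp.single 0 1) := by
        rw [Finsupp.single_le_iff, htv1, hn]
        omega
      rw [if_neg (fun h => hc1 h.1), zero_add, ht0]
      have hle : Finsupp.single (0 : Fin 2) 1 ≤ n + Finsupp.single 0 1 := le_add_self
      by_cases hg' : n ∈ g.support
      · rw [if_pos ⟨hle, Finset.mem_filter.mpr ⟨hg', hn⟩⟩, coeff_neg]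
        field_simp
      · rw [if_neg (fun h => hg' (Finset.mem_filter.mp h.2).1), coeff_neg,
          MvPolynomial.notMem_support_iff.mp hg']
        simp
    · -- n 1 ≥ 1
      have hle1 : Finsupp.single (1 : Fin 2) 1 ≤ n + Finsupp.single 0 1 := by
        rw [Finsupp.single_le_iff, htv1]
        omega
      have hc2 : ¬ (((Finsupp.single (0 : Fin 2) 1 ≤ n + Finsupp.single 0 1)) ∧
          ((n + Finsupp.single 0 1) - Finsupp.single 0 1 ∈
            Finset.filter (fun m => m 1 = 0) g.support)) := by
        rw [ht0]
        rintro ⟨-, h⟩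
        exact hn (Finset.mem_filter.mp h).2
      rw [if_neg hc2, add_zero]
      set u : Fin 2 →₀ ℕ := (n + Finsupp.single 0 1) - Finsupp.single 1 1 with hu
      have hu1 : u 1 + 1 = n 1 := by
        rw [hu]
        rw [Finsupp.tsub_apply, Finsupp.add_apply, Finsupp.single_apply, Finsupp.single_apply]
        simp [h01]
        omega
      -- divergence-free identity at index n - e1
      have hkey : ((n 0 + 1 : ℕ) : ℝ) * coeff u f + ((n 1 : ℕ) : ℝ) * coeff n g = 0 := by
        have hd := congrArg (coeff (n - Finsupp.single 1 1)) hdiv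
        rw [coeff_add, coeff_pderiv'', coeff_pderiv'', coeff_zero] at hd
        have e1le : Finsupp.single (1 : Fin 2) 1 ≤ n := by
          rw [Finsupp.single_le_iff]; omega
        have ha : (n - Finsupp.single 1 1) + Finsupp.single 1 1 = n :=
          tsub_add_cancel_of_le e1le
        have hb : (n - Finsupp.single 1 1) + Finsupp.single 0 1 = u := by
          rw [hu]
          ext j
          simp only [Finsupp.add_apply, Finsupp.tsub_apply, Finsupp.single_apply]
          have hn1' : 1 ≤ n 1 := by omega
          fin_cases j <;> simp [h01] <;> omega
        have hc : (n - Finsupp.single 1 1 : Fin 2 →₀ ℕ) 0 = n 0 := by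
          rw [Finsupp.tsub_apply, Finsupp.single_apply]
          simp [h01.symm]
        have hdd : (n - Finsupp.single 1 1 : Fin 2 →₀ ℕ) 1 + 1 = n 1 := by
          rw [Finsupp.tsub_apply, Finsupp.single_apply]
          simp
          omega
        rw [ha, hb, hc, hdd] at hd
        exact_mod_cast hd
      have hval : ((if (Finsupp.single (1 : Fin 2) 1 ≤ n + Finsupp.single 0 1) ∧ u ∈ f.support
          then coeff u f / ((u 1 + 1 : ℕ) : ℝ) else 0)) = coeff u f / ((n 1 : ℕ) : ℝ) := by
        by_cases huf : u ∈ f.support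
        · rw [if_pos ⟨hle1, huf⟩, hu1]
        · rw [if_neg (fun h => huf h.2), MvPolynomial.notMem_support_iff.mp huf, zero_div]
      rw [hval, coeff_neg]
      have hn1 : ((n 1 : ℕ) : ℝ) ≠ 0 := by
        exact_mod_cast hn
      field_simp
      push_cast at hkey ⊢
      linarith [hkey]

lemma pderiv_comm'' (p : MvPolynomial (Fin 2) ℝ) :
    pderiv (0 : Fin 2) (pderiv (1 : Fin 2) p) = pderiv (1 : Fin 2) (pderiv (0 : Fin 2) p) := by
  ext m
  rw [coeff_pderiv'', coeff_pderiv'', coeff_pderiv'', coeff_pderiv'']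
  have h01 : (0 : Fin 2) ≠ 1 := by decide
  have h1 : (m + Finsupp.single (0 : Fin 2) 1 : Fin 2 →₀ ℕ) 1 = m 1 := by
    simp [Finsupp.single_apply, h01]
  have h2 : (m + Finsupp.single (1 : Fin 2) 1 : Fin 2 →₀ ℕ) 0 = m 0 := by
    simp [Finsupp.single_apply, h01.symm]
  rw [h1, h2, add_right_comm]
  ring

/-- For `ℓ ≥ 0` and `x₀ ∈ ℝ²`, the space `P_ℓ × P_ℓ` of pairs of
bivariate real polynomials of total degree at most `ℓ` is the internal direct sum of
`R_ℓ = {(∂₂q, −∂₁q) : q ∈ P_{ℓ+1}}` (rotated gradients) and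
`R^c_ℓ = {((X₁ − x₀₁) r, (X₂ − x₀₂) r) : r ∈ P_{ℓ−1}}` (with the convention `P_{−1} = {0}`,
encoded by `r = 0 ∨ totalDegree r < ℓ`). -/
theorem stmt_0 (ℓ : ℕ) (x₀ : ℝ × ℝ) :
    let P2 : Set (MvPolynomial (Fin 2) ℝ × MvPolynomial (Fin 2) ℝ) :=
      {v | v.1.totalDegree ≤ ℓ ∧ v.2.totalDegree ≤ ℓ}
    let R : Set (MvPolynomial (Fin 2) ℝ × MvPolynomial (Fin 2) ℝ) :=
      {v | ∃ q : MvPolynomial (Fin 2) ℝ, q.totalDegree ≤ ℓ + 1 ∧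
        v = (pderiv (1 : Fin 2) q, -(pderiv (0 : Fin 2) q))}
    let Rc : Set (MvPolynomial (Fin 2) ℝ × MvPolynomial (Fin 2) ℝ) :=
      {v | ∃ r : MvPolynomial (Fin 2) ℝ, (r = 0 ∨ r.totalDegree < ℓ) ∧
        v = ((X 0 - C x₀.1) * r, (X 1 - C x₀.2) * r)}
    R ∩ Rc = {0} ∧ (∀ v, v ∈ P2 ↔ ∃ a ∈ R, ∃ b ∈ Rc, v = a + b) := by
  intro P2 R Rc
  classical
  obtain ⟨a, b⟩ := x₀
  have hC2 : (C 2 : MvPolynomial (Fin 2) ℝ) = 2 := by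
    exact_mod_cast map_ofNat (C : ℝ →+* MvPolynomial (Fin 2) ℝ) 2
  constructor
  · -- intersection
    ext v
    simp only [Set.mem_inter_iff, Set.mem_singleton_iff]
    constructor
    · rintro ⟨⟨q, hq, rfl⟩, ⟨r, hr, hv⟩⟩
      rw [Prod.mk.injEq] at hv
      obtain ⟨h1, h2⟩ := hv
      -- divergence is zero
      have hdiv : pderiv (0 : Fin 2) ((X 0 - C a) * r) + pderiv (1 : Fin 2) ((X 1 - C b) * r)
          = 0 := by
        rw [← h1, ← h2, map_neg, pderiv_comm'']
        ring
      have hLr : C 2 * r + (X 0 - C a) * pderiv (0 : Fin 2) r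
          + (X 1 - C b) * pderiv (1 : Fin 2) r = 0 := by
        rw [pderiv_mul, pderiv_mul] at hdiv
        rw [hC2]
        rw [map_sub, map_sub, pderiv_X_self, pderiv_C, pderiv_X_self, pderiv_C] at hdiv
        rw [← hdiv]
        ring
      -- shift to the origin
      set s : MvPolynomial (Fin 2) ℝ := shift2 a b r with hs
      have hes : C 2 * s + X 0 * pderiv (0 : Fin 2) s + X 1 * pderiv (1 : Fin 2) s = 0 := by
        have := congrArg (shift2 a b) hLr
        rw [map_add, map_add, map_mul, map_mul, map_mul, map_zero] at this
        rw [map_sub, map_sub, shift2_X0, shift2_X1] at this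
        have hca : shift2 a b (C a) = C a := by simp [shift2]
        have hcb : shift2 a b (C b) = C b := by simp [shift2]
        have hc2 : shift2 a b (C 2) = C 2 := by simp [shift2]
        rw [hca, hcb, hc2, ← pderiv_shift2, ← pderiv_shift2] at this
        rw [← hs] at this
        convert this using 2 <;> ring
      have hs0 : s = 0 := euler_inj s hes
      have hr0 : r = 0 := by
        have := shift2_shift2 a b r
        rw [← hs, hs0, map_zero] at this
        exact this.symm
      rw [h1, h2, hr0]
      simp [Prod.ext_iff]
    · intro h
      refine ⟨⟨0, by simp, ?_⟩, ⟨0, Or.inl rfl, ?_⟩⟩ <;> simp [h, Prod.ext_iff]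
  · -- direct sum
    intro v
    constructor
    · rintro ⟨hu, hw⟩
      obtain ⟨u, w⟩ := v
      simp only at hu hw
      set d : MvPolynomial (Fin 2) ℝ := pderiv (0 : Fin 2) u + pderiv (1 : Fin 2) w with hd
      obtain ⟨s, hs_eq, hs_deg, hs_zero⟩ := euler_surj (shift2 a b d)
      set r : MvPolynomial (Fin 2) ℝ := shift2 (-a) (-b) s with hrdef
      have hLr : C 2 * r + (X 0 - C a) * pderiv (0 : Fin 2) r
          + (X 1 - C b) * pderiv (1 : Fin 2) r = d := by
        have := congrArg (shift2 (-a) (-b)) hs_eq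
        rw [map_add, map_add, map_mul, map_mul, map_mul] at this
        rw [shift2_X0, shift2_X1, shift2_shift2] at this
        have hca : shift2 (-a) (-b) (C 2) = C 2 := by simp [shift2]
        rw [hca, ← pderiv_shift2, ← pderiv_shift2, ← hrdef] at this
        rw [← this]
        have hca' : (C (-a) : MvPolynomial (Fin 2) ℝ) = -(C a) := by simp
        have hcb' : (C (-b) : MvPolynomial (Fin 2) ℝ) = -(C b) := by simp
        rw [hca', hcb']
        ring
      -- degree of r
      have hr_opt : r = 0 ∨ r.totalDegree < ℓ := by
        by_cases hd0 : d = 0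
        · left
          rw [hrdef, hs_zero (by rw [hd0, map_zero]), map_zero]
        · right
          have hdlt : d.totalDegree < ℓ := by
            have hsupp : ∀ m ∈ d.support, (m.sum fun _ e => e) + 1 ≤ ℓ := by
              intro m hm
              have hc := MvPolynomial.mem_support_iff.mp hm
              rw [hd, coeff_add] at hc
              have hor : coeff m (pderiv (0 : Fin 2) u) ≠ 0 ∨
                  coeff m (pderiv (1 : Fin 2) w) ≠ 0 := by
                by_contra hcon
                push_neg at hcon
                rw [hcon.1, hcon.2, add_zero] at hc
                exact hc rfl
              rcases hor with h | h
              · exact (support_pderiv_le 0 u m (MvPolynomial.mem_support_iff.mpr h)).trans hu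
              · exact (support_pderiv_le 1 w m (MvPolynomial.mem_support_iff.mpr h)).trans hw
            obtain ⟨m0, hm0⟩ := MvPolynomial.support_nonempty.mpr hd0
            have hl1 : 1 ≤ ℓ := le_trans (by omega) (hsupp m0 hm0)
            rw [totalDegree]
            refine Finset.sup_lt_iff (show (⊥ : ℕ) < ℓ by
              simp only [bot_eq_zero']
              omega) |>.mpr fun m hm => ?_
            have := hsupp m hm
            omega
          calc r.totalDegree ≤ s.totalDegree := totalDegree_shift2_le _ _ _
            _ ≤ (shift2 a b d).totalDegree := hs_deg
            _ ≤ d.totalDegree := totalDegree_shift2_le _ _ _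
            _ < ℓ := hdlt
      have hrdeg : ((X 0 - C a) * r).totalDegree ≤ ℓ ∧ ((X 1 - C b) * r).totalDegree ≤ ℓ := by
        rcases hr_opt with h | h
        · rw [h]
          simp
        · constructor <;>
          · refine (totalDegree_mul _ _).trans ?_
            have hx : (X 0 - C a : MvPolynomial (Fin 2) ℝ).totalDegree ≤ 1 := by
              refine (totalDegree_sub _ _).trans ?_
              simp [totalDegree_X, totalDegree_C]
            have hx' : (X 1 - C b : MvPolynomial (Fin 2) ℝ).totalDegree ≤ 1 := by
              refine (totalDegree_sub _ _).trans ?_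
              simp [totalDegree_X, totalDegree_C]
            omega
      -- the divergence-free remainder
      set f : MvPolynomial (Fin 2) ℝ := u - (X 0 - C a) * r with hf
      set g : MvPolynomial (Fin 2) ℝ := w - (X 1 - C b) * r with hg
      have hdivfg : pderiv (0 : Fin 2) f + pderiv (1 : Fin 2) g = 0 := by
        rw [hf, hg, map_sub, map_sub, pderiv_mul, pderiv_mul]
        rw [map_sub, map_sub, pderiv_X_self, pderiv_C, pderiv_X_self, pderiv_C]
        have : pderiv (0 : Fin 2) u + pderiv (1 : Fin 2) w = d := rfl
        rw [hC2] at hLr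
        calc pderiv (0 : Fin 2) u - ((1 - 0) * r + (X 0 - C a) * pderiv (0 : Fin 2) r)
              + (pderiv (1 : Fin 2) w - ((1 - 0) * r + (X 1 - C b) * pderiv (1 : Fin 2) r))
            = (pderiv (0 : Fin 2) u + pderiv (1 : Fin 2) w)
              - (2 * r + (X 0 - C a) * pderiv (0 : Fin 2) r
                + (X 1 - C b) * pderiv (1 : Fin 2) r) := by ring
          _ = 0 := by rw [this, hLr, sub_self]
      have hfdeg : f.totalDegree ≤ ℓ := by
        rw [hf]
        exact (totalDegree_sub _ _).trans (max_le hu hrdeg.1)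
      have hgdeg : g.totalDegree ≤ ℓ := by
        rw [hg]
        exact (totalDegree_sub _ _).trans (max_le hw hrdeg.2)
      obtain ⟨q, hqdeg, hq1, hq0⟩ := poincare ℓ f g hfdeg hgdeg hdivfg
      refine ⟨(pderiv (1 : Fin 2) q, -(pderiv (0 : Fin 2) q)), ⟨q, hqdeg, rfl⟩,
        ((X 0 - C a) * r, (X 1 - C b) * r), ⟨r, hr_opt, rfl⟩, ?_⟩
      rw [Prod.ext_iff]
      constructor
      · show u = pderiv (1 : Fin 2) q + (X 0 - C a) * r
        rw [hq1, hf]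
        ring
      · show w = -(pderiv (0 : Fin 2) q) + (X 1 - C b) * r
        rw [hq0, hg]
        ring
    · rintro ⟨p1, ⟨q, hq, rfl⟩, p2, ⟨r, hr, rfl⟩, rfl⟩
      have hxr : ∀ (i : Fin 2) (c : ℝ), ((X i - C c) * r).totalDegree ≤ ℓ := by
        intro i c
        rcases hr with h | h
        · rw [h]; simp
        · refine (totalDegree_mul _ _).trans ?_
          have hx : (X i - C c : MvPolynomial (Fin 2) ℝ).totalDegree ≤ 1 := by
            refine (totalDegree_sub _ _).trans ?_
            simp [totalDegree_X, totalDegree_C]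
          omega
      constructor
      · show (pderiv (1 : Fin 2) q + (X 0 - C a) * r).totalDegree ≤ ℓ
        refine (totalDegree_add _ _).trans (max_le ?_ (hxr 0 a))
        exact totalDegree_pderiv_le' 1 q ℓ hq
      · show (-(pderiv (0 : Fin 2) q) + (X 1 - C b) * r).totalDegree ≤ ℓ
        refine (totalDegree_add _ _).trans (max_le ?_ (hxr 1 b))
        rw [totalDegree_neg]
        exact totalDegree_pderiv_le' 0 q ℓ hq
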